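/- Let q ≥ 1, let dᵢ > 0, c < 1/2, and suppose fᵢᵢ = ((6c−1)/4)dᵢ + (1/2)∑ⱼ [j; i i] and fᵢⱼ = (1/2)∑ₖ [k; i j] for i ≠ j, where [k; i j] ≥ 0 are symmetric in all three indices and satisfy ∑_{j,k} [k; i j] = dᵢ(1 − 2c) for each i. If c > 3/10, then fᵢᵢ > ∑_{j≠i} |fᵢⱼ| for every i. -/

import Mathlib

theorem stmt_15 (q : ℕ) (hq : 1 ≤ q) (d : Fin q → ℝ) (hd : ∀ i, 0 < d i)
    (c : ℝ) (hc : c < 1/2) (hc' : 3/10 < c)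
    (T : Fin q → Fin q → Fin q → ℝ)
    (hnn : ∀ i j k, 0 ≤ T k i j)
    (hsym₁ : ∀ i j k, T k i j = T k j i)
    (hsym₂ : ∀ i j k, T k i j = T j i k)
    (hWZ : ∀ i, ∑ j, ∑ k, T k i j = d i * (1 - 2*c))
    (F : Matrix (Fin q) (Fin q) ℝ)
    (hdiag : ∀ i, F i i = ((6*c - 1)/4) * d i + (1/2) * ∑ j, T j i i)
    (hoff : ∀ i j, i ≠ j → F i j = (1/2) * ∑ k, T k i j) :
    ∀ i, ∑ j ∈ Finset.univ.erase i, |F i j| < F i i := by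
  intro i
  have habs : ∀ j ∈ Finset.univ.erase i, |F i j| = (1/2) * ∑ k, T k i j := by
    intro j hj
    have hji : i ≠ j := (Finset.ne_of_mem_erase hj).symm
    rw [hoff i j hji, abs_of_nonneg]
    exact mul_nonneg (by norm_num) (Finset.sum_nonneg fun k _ => hnn i j k)
  rw [Finset.sum_congr rfl habs]
  have hsplit : ∑ j ∈ Finset.univ.erase i, (1/2) * ∑ k, T k i j
      = (1/2) * (d i * (1 - 2*c)) - (1/2) * ∑ k, T k i i := by
    rw [← Finset.mul_sum, Finset.sum_erase_eq_sub (Finset.mem_univ i), hWZ i]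
    ring
  rw [hsplit, hdiag i]
  have hS : 0 ≤ ∑ j, T j i i := Finset.sum_nonneg fun j _ => hnn i i j
  have hSeq : ∑ k, T k i i = ∑ j, T j i i := rfl
  rw [hSeq]
  nlinarith [hd i]
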